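/- Let mu be a probability measure on [0,1] with density a in the |D|-domain. Define the Battacharyya functional B(a) = integral over [0,1] of sqrt(1-z^2) d mu(z) and the entropy functional H(a) = integral over [0,1] of h2((1-z)/2) d mu(z). Then B(a)^2 <= H(a) <= B(a). -/

import Mathlib

open MeasureTheory

/-- The binary entropy function. -/
noncomputable def h2 (x : ℝ) : ℝ := -(x * Real.logb 2 x) - (1 - x) * Real.logb 2 (1 - x)

/-- The Battacharyya functional of a `|D|`-distribution. -/
noncomputable def batta (μ : Measure ℝ) : ℝ := ∫ z, Real.sqrt (1 - z^2) ∂μ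

/-- The entropy functional of a `|D|`-distribution. -/
noncomputable def entF (μ : Measure ℝ) : ℝ := ∫ z, h2 ((1 - z)/2) ∂μ

open Real Set

lemma nonneg_of_symm_scheme (F : ℝ → ℝ) (a : ℝ) (ha0 : 0 < a) (ha : a ≤ 1/2)
    (hsymm : ∀ p, F (1-p) = F p) (hF0 : F 0 = 0) (hFhalf : F (1/2) = 0)
    (hconc : ConcaveOn ℝ (Icc 0 a) F) (hconv : ConvexOn ℝ (Icc a (1-a)) F) :
    ∀ p ∈ Icc (0:ℝ) 1, 0 ≤ F p := by
  have hmid : ∀ x ∈ Icc a (1-a), 0 ≤ F x := by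
    intro x hx
    have hx' : (1:ℝ) - x ∈ Icc a (1-a) :=
      ⟨by linarith [hx.2], by linarith [hx.1]⟩
    have h := hconv.2 hx hx' (by norm_num : (0:ℝ) ≤ 1/2) (by norm_num : (0:ℝ) ≤ 1/2)
      (by norm_num)
    have e1 : (1/2 : ℝ) • x + (1/2 : ℝ) • (1-x) = 1/2 := by ring_nf
    have e2 : (1/2 : ℝ) • F x + (1/2 : ℝ) • F (1-x) = F x := by
      rw [hsymm x]; simp [smul_eq_mul]; ring
    rw [e1, e2, hFhalf] at h
    exact h
  have hedge : ∀ x ∈ Icc (0:ℝ) a, 0 ≤ F x := by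
    intro x hx
    have hFa : 0 ≤ F a := hmid a ⟨le_refl a, by linarith⟩
    have ht0 : 0 ≤ x / a := div_nonneg hx.1 ha0.le
    have ht1 : x / a ≤ 1 := (div_le_one ha0).2 hx.2
    have h := hconc.2 (show (0:ℝ) ∈ Icc (0:ℝ) a from ⟨le_refl 0, ha0.le⟩)
      (show a ∈ Icc (0:ℝ) a from ⟨ha0.le, le_refl a⟩)
      (by linarith : (0:ℝ) ≤ 1 - x/a) ht0 (by ring)
    have hxa : (1 - x/a) • (0:ℝ) + (x/a) • a = x := by
      field_simp
      simp [smul_eq_mul, ha0.ne']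
    rw [hxa] at h
    have : (1 - x/a) • F 0 + (x/a) • F a = (x/a) * F a := by
      rw [hF0]; simp [smul_eq_mul]
    rw [this] at h
    exact le_trans (mul_nonneg ht0 hFa) h
  intro p hp
  rcases le_or_gt p a with h1 | h1
  · exact hedge p ⟨hp.1, h1⟩
  rcases le_or_gt p (1-a) with h2 | h2
  · exact hmid p ⟨h1.le, h2⟩
  · rw [← hsymm p]
    exact hedge (1-p) ⟨by linarith [hp.2], by linarith⟩

noncomputable def Gfun : ℝ → ℝ := fun p => Real.binEntropy p - 4*Real.log 2*(p - p^2)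
noncomputable def Eg : ℝ → ℝ := fun p => Real.log (1-p) - Real.log p - 4*Real.log 2*(1 - 2*p)

lemma hasDerivAt_Gfun {x : ℝ} (h0 : x ≠ 0) (h1 : x ≠ 1) : HasDerivAt Gfun (Eg x) x := by
  have h := Real.hasDerivAt_binEntropy h0 h1
  have hin : HasDerivAt (fun p : ℝ => p - p^2) (1 - 2*x) x := by
    simpa using (hasDerivAt_id x).fun_sub (hasDerivAt_pow 2 x)
  have hpoly := hin.const_mul (4*Real.log 2)
  exact h.fun_sub hpoly

lemma hasDerivAt_Eg {x : ℝ} (h0 : 0 < x) (h1 : x < 1) :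
    HasDerivAt Eg (8*Real.log 2 - 1/(1-x) - 1/x) x := by
  have hl1 : HasDerivAt (fun p:ℝ => Real.log (1-p)) (-(1/(1-x))) x := by
    have hin : HasDerivAt (fun p:ℝ => 1 - p) (-1) x := by
      simpa using (hasDerivAt_const x (1:ℝ)).fun_sub (hasDerivAt_id x)
    have := (Real.hasDerivAt_log (by linarith : (1:ℝ)-x ≠ 0)).comp x hin
    convert this using 1 <;> try rfl
    field_simp
  have hl2 : HasDerivAt Real.log x⁻¹ x := Real.hasDerivAt_log (ne_of_gt h0)
  have hin : HasDerivAt (fun p : ℝ => 1 - 2*p) (-2) x := by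
    simpa using (hasDerivAt_const x (1:ℝ)).fun_sub ((hasDerivAt_id x).const_mul 2)
  have hpoly := hin.const_mul (4*Real.log 2)
  have := (hl1.fun_sub hl2).fun_sub hpoly
  convert this using 1 <;> try rfl
  have : x⁻¹ = 1/x := (one_div x).symm
  rw [this]; ring

lemma deriv_Gfun_eq : ∀ x ∈ Ioo (0:ℝ) 1, deriv Gfun x = Eg x := fun x hx =>
  (hasDerivAt_Gfun (ne_of_gt hx.1) (ne_of_lt hx.2)).deriv

lemma hasDerivAt_deriv_Gfun {x : ℝ} (h0 : 0 < x) (h1 : x < 1) :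
    HasDerivAt (deriv Gfun) (8*Real.log 2 - 1/(1-x) - 1/x) x := by
  refine (hasDerivAt_Eg h0 h1).congr_of_eventuallyEq ?_
  exact Filter.eventuallyEq_of_mem (isOpen_Ioo.mem_nhds ⟨h0, h1⟩) deriv_Gfun_eq

lemma continuous_Gfun : Continuous Gfun :=
  Real.binEntropy_continuous.sub (by continuity)

lemma log2_gt : (0.6931:ℝ) < Real.log 2 := by
  have := Real.log_two_gt_d9; linarith

lemma log2_lt : Real.log 2 < (0.6932:ℝ) := by
  have := Real.log_two_lt_d9; linarith

noncomputable def aG : ℝ := (1 - Real.sqrt (1 - 1/(2*Real.log 2)))/2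

lemma aG_facts : 0 < aG ∧ aG ≤ 1/2 ∧ aG*(1-aG) = 1/(8*Real.log 2) := by
  have hL := log2_gt
  have hL' := log2_lt
  have hs0 : (0:ℝ) ≤ 1 - 1/(2*Real.log 2) := by
    rw [sub_nonneg, div_le_one (by linarith)]; linarith
  have hs1 : 1 - 1/(2*Real.log 2) < 1 := by
    have : 0 < 1/(2*Real.log 2) := by positivity
    linarith
  have hsq := Real.sq_sqrt hs0
  have hnn := Real.sqrt_nonneg (1 - 1/(2*Real.log 2))
  have hlt : Real.sqrt (1 - 1/(2*Real.log 2)) < 1 := by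
    have := Real.sqrt_lt_sqrt hs0 hs1
    rwa [Real.sqrt_one] at this
  refine ⟨by unfold aG; linarith, by unfold aG; linarith, ?_⟩
  have hs2' : 2*Real.log 2 * Real.sqrt (1 - 1/(2*Real.log 2)) ^ 2 = 2*Real.log 2 - 1 := by
    rw [hsq]; field_simp
  rw [eq_div_iff (by positivity : (8:ℝ)*Real.log 2 ≠ 0)]
  unfold aG
  linear_combination -hs2'

lemma Gfun_concave_edge : ConcaveOn ℝ (Icc (0:ℝ) aG) Gfun := by
  obtain ⟨ha0, ha12, haval⟩ := aG_facts
  have hL := log2_gt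
  refine concaveOn_of_deriv2_nonpos (convex_Icc _ _) continuous_Gfun.continuousOn ?_ ?_ ?_
  · rw [interior_Icc]
    intro x hx
    exact (hasDerivAt_Gfun (ne_of_gt hx.1) (by nlinarith [hx.2] : x ≠ 1)).differentiableAt.differentiableWithinAt
  · rw [interior_Icc]
    intro x hx
    have h1 : x < 1 := by linarith [hx.2]
    exact (hasDerivAt_deriv_Gfun hx.1 h1).differentiableAt.differentiableWithinAt
  · rw [interior_Icc]
    intro x hx
    have h0 : 0 < x := hx.1
    have h1 : x < 1 := by linarith [hx.2]
    have : deriv^[2] Gfun x = 8*Real.log 2 - 1/(1-x) - 1/x :=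
      (hasDerivAt_deriv_Gfun h0 h1).deriv
    rw [this]
    -- concave side: x*(1-x) ≤ aG*(1-aG) = 1/(8 log 2)
    have hm : x*(1-x) ≤ 1/(8*Real.log 2) := by
      rw [← haval]; nlinarith [hx.2, ha12]
    have hxm : 0 < x*(1-x) := by nlinarith
    have key : 8*Real.log 2 * (x*(1-x)) ≤ 1 := by
      have := (le_div_iff₀ (by linarith : (0:ℝ) < 8*Real.log 2)).1 hm
      linarith [this]
    have hsum : 1/(1-x) + 1/x = 1/(x*(1-x)) := by
      field_simp [h0.ne', (by linarith : (1:ℝ)-x ≠ 0)]; ring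
    have : 8*Real.log 2 ≤ 1/(x*(1-x)) := by
      rw [le_div_iff₀ hxm]; linarith
    linarith [hsum, this]

lemma Gfun_convex_mid : ConvexOn ℝ (Icc aG (1-aG)) Gfun := by
  obtain ⟨ha0, ha12, haval⟩ := aG_facts
  have hL := log2_gt
  refine convexOn_of_deriv2_nonneg (convex_Icc _ _) continuous_Gfun.continuousOn ?_ ?_ ?_
  · rw [interior_Icc]
    intro x hx
    have h0 : 0 < x := lt_trans ha0 hx.1
    have h1 : x < 1 := by linarith [hx.2]
    exact (hasDerivAt_Gfun h0.ne' h1.ne).differentiableAt.differentiableWithinAt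
  · rw [interior_Icc]
    intro x hx
    have h0 : 0 < x := lt_trans ha0 hx.1
    have h1 : x < 1 := by linarith [hx.2]
    exact (hasDerivAt_deriv_Gfun h0 h1).differentiableAt.differentiableWithinAt
  · rw [interior_Icc]
    intro x hx
    have h0 : 0 < x := lt_trans ha0 hx.1
    have h1 : x < 1 := by linarith [hx.2]
    have heq : deriv^[2] Gfun x = 8*Real.log 2 - 1/(1-x) - 1/x :=
      (hasDerivAt_deriv_Gfun h0 h1).deriv
    rw [heq]
    have hm : 1/(8*Real.log 2) ≤ x*(1-x) := by
      rw [← haval]; nlinarith [hx.1, hx.2]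
    have hxm : 0 < x*(1-x) := by nlinarith
    have key : 1 ≤ 8*Real.log 2 * (x*(1-x)) := by
      have := (div_le_iff₀ (by linarith : (0:ℝ) < 8*Real.log 2)).1 hm
      nlinarith [this]
    have hsum : 1/(1-x) + 1/x = 1/(x*(1-x)) := by
      field_simp [h0.ne', (by linarith : (1:ℝ)-x ≠ 0)]; ring
    have : 1/(x*(1-x)) ≤ 8*Real.log 2 := by
      rw [div_le_iff₀ hxm]; linarith
    linarith [hsum, this]

lemma binEntropy_ge : ∀ p ∈ Icc (0:ℝ) 1, 4*Real.log 2*(p - p^2) ≤ Real.binEntropy p := by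
  obtain ⟨ha0, ha12, _⟩ := aG_facts
  have h := nonneg_of_symm_scheme Gfun aG ha0 ha12
    (fun p => by simp only [Gfun, Real.binEntropy_one_sub]; ring)
    (by simp [Gfun])
    (by
      have : Real.binEntropy (1/2 : ℝ) = Real.log 2 := by
        rw [show (1/2:ℝ) = 2⁻¹ by norm_num, Real.binEntropy_two_inv]
      simp [Gfun, this]; ring)
    Gfun_concave_edge Gfun_convex_mid
  intro p hp
  have := h p hp
  simp only [Gfun] at this
  linarith

noncomputable def Ffun : ℝ → ℝ := fun p => 2*Real.log 2*Real.sqrt (p - p^2) - Real.binEntropy p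
noncomputable def Ef : ℝ → ℝ := fun p =>
  Real.log 2*(1-2*p)/Real.sqrt (p-p^2) - Real.log (1-p) + Real.log p

lemma hasDerivAt_sqrtm {x : ℝ} (h0 : 0 < x) (h1 : x < 1) :
    HasDerivAt (fun p : ℝ => Real.sqrt (p - p^2)) ((1-2*x)/(2*Real.sqrt (x-x^2))) x := by
  have hm : 0 < x - x^2 := by nlinarith
  have hin : HasDerivAt (fun p : ℝ => p - p^2) (1 - 2*x) x := by
    simpa using (hasDerivAt_id x).fun_sub (hasDerivAt_pow 2 x)
  have h := (Real.hasDerivAt_sqrt hm.ne').comp x hin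
  convert h using 1 <;> try rfl
  field_simp

lemma hasDerivAt_Ffun {x : ℝ} (h0 : 0 < x) (h1 : x < 1) : HasDerivAt Ffun (Ef x) x := by
  have hm : 0 < x - x^2 := by nlinarith
  have hs : 0 < Real.sqrt (x - x^2) := Real.sqrt_pos.2 hm
  have h1' := (hasDerivAt_sqrtm h0 h1).const_mul (2*Real.log 2)
  have h2' := Real.hasDerivAt_binEntropy h0.ne' h1.ne
  have := h1'.fun_sub h2'
  convert this using 1 <;> try rfl
  simp only [Ef]
  field_simp
  ring

lemma hasDerivAt_Ef {x : ℝ} (h0 : 0 < x) (h1 : x < 1) :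
    HasDerivAt Ef ((2*Real.sqrt (x-x^2) - Real.log 2)/(2*(Real.sqrt (x-x^2))^3)) x := by
  have hm : 0 < x - x^2 := by nlinarith
  have hs : 0 < Real.sqrt (x - x^2) := Real.sqrt_pos.2 hm
  have hs2 : Real.sqrt (x - x^2)^2 = x - x^2 := Real.sq_sqrt hm.le
  have hnum : HasDerivAt (fun p : ℝ => Real.log 2*(1-2*p)) (Real.log 2*(-2)) x := by
    have hin : HasDerivAt (fun p : ℝ => 1 - 2*p) (-2) x := by
      simpa using (hasDerivAt_const x (1:ℝ)).fun_sub ((hasDerivAt_id x).const_mul 2)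
    exact hin.const_mul _
  have hdiv := hnum.div (hasDerivAt_sqrtm h0 h1) hs.ne'
  have hl1 : HasDerivAt (fun p:ℝ => Real.log (1-p)) (-(1/(1-x))) x := by
    have hin : HasDerivAt (fun p:ℝ => 1 - p) (-1) x := by
      simpa using (hasDerivAt_const x (1:ℝ)).fun_sub (hasDerivAt_id x)
    have := (Real.hasDerivAt_log (by linarith : (1:ℝ)-x ≠ 0)).comp x hin
    convert this using 1 <;> try rfl
    field_simp
  have hl2 : HasDerivAt Real.log x⁻¹ x := Real.hasDerivAt_log h0.ne'
  have htot := (hdiv.fun_sub hl1).fun_add hl2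
  convert htot using 1 <;> try rfl
  have h12 : (1-2*x)^2 = 1 - 4*Real.sqrt (x-x^2)^2 := by rw [hs2]; ring
  generalize hsd : Real.sqrt (x-x^2) = s at *
  field_simp [h0.ne', (by linarith : (1:ℝ)-x ≠ 0)]
  linear_combination ((8:ℝ)*Real.log 2*s^3*x - 8*Real.log 2*s^3*x^2 - 4*s^4 + 4*Real.log 2*(x-x^2) - 8*Real.log 2*s^3*(x-x^2) - 2*s + 4*s^4) * hs2

lemma deriv_Ffun_eq : ∀ x ∈ Ioo (0:ℝ) 1, deriv Ffun x = Ef x := fun x hx =>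
  (hasDerivAt_Ffun hx.1 hx.2).deriv

lemma hasDerivAt_deriv_Ffun {x : ℝ} (h0 : 0 < x) (h1 : x < 1) :
    HasDerivAt (deriv Ffun) ((2*Real.sqrt (x-x^2) - Real.log 2)/(2*(Real.sqrt (x-x^2))^3)) x := by
  refine (hasDerivAt_Ef h0 h1).congr_of_eventuallyEq ?_
  exact Filter.eventuallyEq_of_mem (isOpen_Ioo.mem_nhds ⟨h0, h1⟩) deriv_Ffun_eq

lemma continuous_Ffun : Continuous Ffun := by
  apply Continuous.sub _ Real.binEntropy_continuous
  exact continuous_const.mul (Real.continuous_sqrt.comp (by continuity))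


noncomputable def aF : ℝ := (1 - Real.sqrt (1 - (Real.log 2)^2))/2

lemma aF_facts : 0 < aF ∧ aF ≤ 1/2 ∧ aF*(1-aF) = (Real.log 2)^2/4 := by
  have hL := log2_gt
  have hL' := log2_lt
  have hs0 : (0:ℝ) ≤ 1 - (Real.log 2)^2 := by nlinarith
  have hs1 : 1 - (Real.log 2)^2 < 1 := by nlinarith
  have hsq := Real.sq_sqrt hs0
  have hnn := Real.sqrt_nonneg (1 - (Real.log 2)^2)
  have hlt : Real.sqrt (1 - (Real.log 2)^2) < 1 := by
    have := Real.sqrt_lt_sqrt hs0 hs1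
    rwa [Real.sqrt_one] at this
  refine ⟨by unfold aF; linarith, by unfold aF; linarith, ?_⟩
  unfold aF
  linear_combination (-1/4 : ℝ) * hsq

lemma Ffun_concave_edge : ConcaveOn ℝ (Icc (0:ℝ) aF) Ffun := by
  obtain ⟨ha0, ha12, haval⟩ := aF_facts
  have hL := log2_gt
  refine concaveOn_of_deriv2_nonpos (convex_Icc _ _) continuous_Ffun.continuousOn ?_ ?_ ?_
  · rw [interior_Icc]
    intro x hx
    have h1 : x < 1 := by linarith [hx.2]
    exact (hasDerivAt_Ffun hx.1 h1).differentiableAt.differentiableWithinAt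
  · rw [interior_Icc]
    intro x hx
    have h1 : x < 1 := by linarith [hx.2]
    exact (hasDerivAt_deriv_Ffun hx.1 h1).differentiableAt.differentiableWithinAt
  · rw [interior_Icc]
    intro x hx
    have h0 : 0 < x := hx.1
    have h1 : x < 1 := by linarith [hx.2]
    have hm : 0 < x - x^2 := by nlinarith
    have hspos : 0 < Real.sqrt (x - x^2) := Real.sqrt_pos.2 hm
    have heq : deriv^[2] Ffun x = (2*Real.sqrt (x-x^2) - Real.log 2)/(2*(Real.sqrt (x-x^2))^3) :=
      (hasDerivAt_deriv_Ffun h0 h1).deriv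
    rw [heq]
    apply div_nonpos_of_nonpos_of_nonneg _ (by positivity)
    have hmle : x - x^2 ≤ (Real.log 2/2)^2 := by
      have : x*(1-x) ≤ aF*(1-aF) := by nlinarith [hx.2, ha12]
      rw [haval] at this; nlinarith [this]
    have : Real.sqrt (x - x^2) ≤ Real.log 2/2 := by
      have h := Real.sqrt_le_sqrt hmle
      rwa [Real.sqrt_sq (by linarith : (0:ℝ) ≤ Real.log 2/2)] at h
    linarith

lemma Ffun_convex_mid : ConvexOn ℝ (Icc aF (1-aF)) Ffun := by
  obtain ⟨ha0, ha12, haval⟩ := aF_facts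
  have hL := log2_gt
  refine convexOn_of_deriv2_nonneg (convex_Icc _ _) continuous_Ffun.continuousOn ?_ ?_ ?_
  · rw [interior_Icc]
    intro x hx
    have h0 : 0 < x := lt_trans ha0 hx.1
    have h1 : x < 1 := by linarith [hx.2]
    exact (hasDerivAt_Ffun h0 h1).differentiableAt.differentiableWithinAt
  · rw [interior_Icc]
    intro x hx
    have h0 : 0 < x := lt_trans ha0 hx.1
    have h1 : x < 1 := by linarith [hx.2]
    exact (hasDerivAt_deriv_Ffun h0 h1).differentiableAt.differentiableWithinAt
  · rw [interior_Icc]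
    intro x hx
    have h0 : 0 < x := lt_trans ha0 hx.1
    have h1 : x < 1 := by linarith [hx.2]
    have hm : 0 < x - x^2 := by nlinarith
    have hspos : 0 < Real.sqrt (x - x^2) := Real.sqrt_pos.2 hm
    have heq : deriv^[2] Ffun x = (2*Real.sqrt (x-x^2) - Real.log 2)/(2*(Real.sqrt (x-x^2))^3) :=
      (hasDerivAt_deriv_Ffun h0 h1).deriv
    rw [heq]
    apply div_nonneg _ (by positivity)
    have hmge : (Real.log 2/2)^2 ≤ x - x^2 := by
      have : aF*(1-aF) ≤ x*(1-x) := by nlinarith [hx.1, hx.2]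
      rw [haval] at this; nlinarith [this]
    have : Real.log 2/2 ≤ Real.sqrt (x - x^2) :=
      (Real.le_sqrt' (by linarith)).2 hmge
    linarith

lemma binEntropy_le : ∀ p ∈ Icc (0:ℝ) 1, Real.binEntropy p ≤ 2*Real.log 2*Real.sqrt (p - p^2) := by
  obtain ⟨ha0, ha12, _⟩ := aF_facts
  have h := nonneg_of_symm_scheme Ffun aF ha0 ha12
    (fun p => by
      simp only [Ffun, Real.binEntropy_one_sub]
      rw [show (1:ℝ)-p-(1-p)^2 = p - p^2 from by ring])
    (by norm_num [Ffun])
    (by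
      have hb : Real.binEntropy (1/2 : ℝ) = Real.log 2 := by
        rw [show (1/2:ℝ) = 2⁻¹ by norm_num, Real.binEntropy_two_inv]
      simp only [Ffun]
      rw [show (1/2:ℝ) - (1/2)^2 = (1/2)^2 from by norm_num,
        Real.sqrt_sq (by norm_num : (0:ℝ) ≤ 1/2), hb]
      ring)
    Ffun_concave_edge Ffun_convex_mid
  intro p hp
  have := h p hp
  simp only [Ffun] at this
  linarith

lemma h2_eq (x : ℝ) : h2 x = Real.binEntropy x / Real.log 2 := by
  simp only [h2, Real.binEntropy, Real.logb, Real.log_inv]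
  ring

lemma h2_le {z : ℝ} (hz : z ∈ Icc (0:ℝ) 1) : h2 ((1-z)/2) ≤ Real.sqrt (1 - z^2) := by
  have hL : (0:ℝ) < Real.log 2 := by have := log2_gt; linarith
  have hp : (1-z)/2 ∈ Icc (0:ℝ) 1 := ⟨by linarith [hz.2], by linarith [hz.1]⟩
  have hb := binEntropy_le _ hp
  have hz2 : (0:ℝ) ≤ 1 - z^2 := by nlinarith [hz.1, hz.2]
  have hmval : (1-z)/2 - ((1-z)/2)^2 = (1-z^2)*(1/2)^2 := by ring
  rw [hmval, Real.sqrt_mul hz2, Real.sqrt_sq (by norm_num : (0:ℝ) ≤ 1/2)] at hb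
  rw [h2_eq, div_le_iff₀ hL]
  calc Real.binEntropy ((1-z)/2) ≤ 2*Real.log 2*(Real.sqrt (1-z^2)*(1/2)) := hb
    _ = Real.sqrt (1-z^2)*Real.log 2 := by ring

lemma h2_ge {z : ℝ} (hz : z ∈ Icc (0:ℝ) 1) : 1 - z^2 ≤ h2 ((1-z)/2) := by
  have hL : (0:ℝ) < Real.log 2 := by have := log2_gt; linarith
  have hp : (1-z)/2 ∈ Icc (0:ℝ) 1 := ⟨by linarith [hz.2], by linarith [hz.1]⟩
  have hb := binEntropy_ge _ hp
  rw [h2_eq, le_div_iff₀ hL]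
  calc (1-z^2) * Real.log 2 = 4*Real.log 2*((1-z)/2 - ((1-z)/2)^2) := by ring
    _ ≤ Real.binEntropy ((1-z)/2) := hb

/-- For a probability measure on `[0,1]` (a `|D|`-distribution),
`B(a)^2 ≤ H(a) ≤ B(a)`. -/
theorem entropy_vs_battacharyya (μ : Measure ℝ) [IsProbabilityMeasure μ]
    (hsupp : μ (Set.Icc (0:ℝ) 1)ᶜ = 0) :
    (batta μ)^2 ≤ entF μ ∧ entF μ ≤ batta μ := by
  have hae : ∀ᵐ z ∂μ, z ∈ Set.Icc (0:ℝ) 1 := by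
    rw [MeasureTheory.ae_iff]
    exact hsupp
  have hcont_g : Continuous (fun z : ℝ => Real.sqrt (1 - z^2)) := by
    exact Real.continuous_sqrt.comp (by continuity)
  have hcont_h : Continuous (fun z : ℝ => h2 ((1-z)/2)) := by
    have he : (fun z : ℝ => h2 ((1-z)/2))
        = fun z : ℝ => Real.binEntropy ((1-z)/2) / Real.log 2 :=
      funext fun z => h2_eq _
    rw [he]
    exact (Real.binEntropy_continuous.comp (by continuity)).div_const _
  have hgb : ∀ z : ℝ, Real.sqrt (1 - z^2) ≤ 1 := by
    intro z
    calc Real.sqrt (1 - z^2) ≤ Real.sqrt 1 := Real.sqrt_le_sqrt (by nlinarith [sq_nonneg z])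
      _ = 1 := Real.sqrt_one
  have hint_g : Integrable (fun z : ℝ => Real.sqrt (1 - z^2)) μ := by
    apply Integrable.mono' (integrable_const (1:ℝ)) hcont_g.aestronglyMeasurable
    apply Filter.Eventually.of_forall
    intro z
    rw [Real.norm_eq_abs, abs_of_nonneg (Real.sqrt_nonneg _)]
    exact hgb z
  have hint_h : Integrable (fun z : ℝ => h2 ((1-z)/2)) μ := by
    apply Integrable.mono' (integrable_const (1:ℝ)) hcont_h.aestronglyMeasurable
    filter_upwards [hae] with z hz
    rw [Real.norm_eq_abs, abs_le]
    have h1 := h2_ge hz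
    have h2' := h2_le hz
    have hz2 : (0:ℝ) ≤ 1 - z^2 := by nlinarith [hz.1, hz.2]
    exact ⟨by linarith, by linarith [hgb z]⟩
  have hint_s : Integrable (fun z : ℝ => 1 - z^2) μ := by
    apply Integrable.mono' (integrable_const (1:ℝ))
      (by continuity : Continuous (fun z : ℝ => 1 - z^2)).aestronglyMeasurable
    filter_upwards [hae] with z hz
    rw [Real.norm_eq_abs, abs_le]
    constructor <;> nlinarith [hz.1, hz.2]
  have hupper : entF μ ≤ batta μ := by
    apply integral_mono_ae hint_h hint_g
    filter_upwards [hae] with z hz using h2_le hz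
  refine ⟨?_, hupper⟩
  have h1 : ∫ z, (1 - z^2) ∂μ ≤ entF μ := by
    apply integral_mono_ae hint_s hint_h
    filter_upwards [hae] with z hz using h2_ge hz
  have hmem : MeasureTheory.MemLp (fun z : ℝ => Real.sqrt (1 - z^2)) 2 μ := by
    apply MeasureTheory.MemLp.of_bound hcont_g.aestronglyMeasurable 1
    apply Filter.Eventually.of_forall
    intro z
    rw [Real.norm_eq_abs, abs_of_nonneg (Real.sqrt_nonneg _)]
    exact hgb z
  have hvar := ProbabilityTheory.variance_nonneg (fun z : ℝ => Real.sqrt (1 - z^2)) μ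
  rw [ProbabilityTheory.variance_eq_sub hmem] at hvar
  have h2eq : (∫ z, ((fun z : ℝ => Real.sqrt (1 - z^2))^2) z ∂μ) = ∫ z, (1 - z^2) ∂μ := by
    apply integral_congr_ae
    filter_upwards [hae] with z hz
    have hz2 : (0:ℝ) ≤ 1 - z^2 := by nlinarith [hz.1, hz.2]
    simp [Real.sq_sqrt hz2]
  have : (batta μ)^2 ≤ ∫ z, (1 - z^2) ∂μ := by
    rw [← h2eq]
    unfold batta
    linarith [hvar]
  linarith
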